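/- (Convergence of simultaneous gradient play conditioned on gradient value.) Suppose each u_i(·, a_{−i}) is concave in a_i for every fixed a_{−i} ∈ 𝒜_{−i}. Let φ : 𝒜 → ℝ be an L-smooth α-potential function of the game with α > 0, L > 0, bounded from above, satisfying |(∂φ/∂a_i)(a) − (∂u_i/∂a_i)(a)| ≤ α/a_δ for all i and a ∈ 𝒜. Let step sizes η_i > 0 with η̄ := max_i η_i, ξ₁ := 1/a_δ, ξ₂ := min{2ξ₁/L, 1/D}, and suppose η̄ ≤ min{1/L, 2ξ₁²α²/(LD²), Lξ₂²α²/(2(ξ₁αD + ξ₁²α²))}. Let {a^k}_{k=0}^∞ ⊆ 𝒜 be the sequence where, for each k and each player i: a_i^{k+1} = Proj_{𝒜_i}(a_i^k + η_i (∂u_i/∂a_i)(a^k)) if |(∂u_i/∂a_i)(a^k)| > 2α/a_δ, and a_i^{k+1} = a_i^k otherwise. Then there exists k̄ ≥ 0 such that for all k ≥ k̄, a^k is a 2α-Nash equilibrium of the game. -/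

import Mathlib

set_option maxHeartbeats 1000000


open Function

/-- Partial derivative of `f : ℝ^N → ℝ` with respect to coordinate `j` at the point `a`. -/
noncomputable def pd {N : ℕ} (j : Fin N) (f : (Fin N → ℝ) → ℝ) (a : Fin N → ℝ) : ℝ :=
  deriv (fun t => f (Function.update a j t)) (a j)

lemma slice_hasDerivAt {N : ℕ} (f : (Fin N → ℝ) → ℝ) (hf : Differentiable ℝ f)
    (x : Fin N → ℝ) (i : Fin N) (t : ℝ) :
    HasDerivAt (fun s => f (Function.update x i s))
      (fderiv ℝ f (Function.update x i t) (Pi.single i 1)) t := by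
  have hγ : HasDerivAt (fun s : ℝ => Function.update x i s) (Pi.single i (1:ℝ)) t := by
    apply hasDerivAt_pi.2
    intro j
    by_cases hj : j = i
    · subst hj
      simp only [Function.update_self, Pi.single_eq_same]
      exact hasDerivAt_id t
    · simp only [Function.update_of_ne hj, Pi.single_eq_of_ne hj]
      exact hasDerivAt_const t _
  exact (hf _).hasFDerivAt.comp_hasDerivAt t hγ

lemma pd_eq_fderiv {N : ℕ} {f : (Fin N → ℝ) → ℝ} (hf : Differentiable ℝ f)
    (x : Fin N → ℝ) (i : Fin N) : pd i f x = fderiv ℝ f x (Pi.single i 1) := by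
  have h := slice_hasDerivAt f hf x i (x i)
  rw [Function.update_eq_self] at h
  exact h.deriv

lemma fderiv_apply_eq_sum {N : ℕ} {f : (Fin N → ℝ) → ℝ} (hf : Differentiable ℝ f)
    (x v : Fin N → ℝ) : fderiv ℝ f x v = ∑ i, v i * pd i f x := by
  have hb : v = ∑ i, v i • (Pi.single i (1:ℝ) : Fin N → ℝ) := by
    funext j
    rw [Finset.sum_apply]
    simp [Pi.single_apply, mul_ite, mul_one, mul_zero, Finset.sum_ite_eq]
  conv_lhs => rw [hb]
  rw [map_sum]
  refine Finset.sum_congr rfl fun i _ => ?_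
  rw [map_smul, pd_eq_fderiv hf, smul_eq_mul]

lemma tangent_le {S : Set ℝ} {s : ℝ → ℝ} (hc : ConcaveOn ℝ S s) (hd : Differentiable ℝ s)
    {x y : ℝ} (hx : x ∈ S) (hy : y ∈ S) : s y ≤ s x + deriv s x * (y - x) := by
  rcases lt_trichotomy x y with h | h | h
  · have h2 := hc.slope_le_deriv hx hy h (hd x)
    rw [slope_def_field, div_le_iff₀ (by linarith)] at h2
    linarith
  · subst h; simp
  · have h2 := hc.deriv_le_slope hy hx h (hd x)
    rw [slope_def_field, le_div_iff₀ (by linarith)] at h2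
    nlinarith

lemma abs_sum_mul_le_sqrt {N : ℕ} (f g : Fin N → ℝ) :
    |∑ i, f i * g i| ≤ Real.sqrt (∑ i, f i ^ 2) * Real.sqrt (∑ i, g i ^ 2) := by
  rw [← Real.sqrt_sq_eq_abs, ← Real.sqrt_mul (by positivity)]
  exact Real.sqrt_le_sqrt (Finset.sum_mul_sq_le_sq_mul_sq _ _ _)

lemma clamp_cases {lo hi x z : ℝ} (hx : lo ≤ x) (hx' : x ≤ hi) :
    (lo ≤ z ∧ z ≤ hi ∧ max lo (min hi z) = z) ∨ (hi < z ∧ max lo (min hi z) = hi) ∨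
      (z < lo ∧ max lo (min hi z) = lo) := by
  rcases lt_or_ge hi z with h | h
  · exact Or.inr (Or.inl ⟨h, by rw [min_eq_left h.le, max_eq_right (hx.trans hx')]⟩)
  rcases lt_or_ge z lo with h2 | h2
  · exact Or.inr (Or.inr ⟨h2, by rw [min_eq_right h, max_eq_left h2.le]⟩)
  · exact Or.inl ⟨h2, h, by rw [min_eq_right h, max_eq_right h2]⟩
lemma descent {N : ℕ} {φ : (Fin N → ℝ) → ℝ} (hφ : Differentiable ℝ φ)
    {L : ℝ} {A : Set (Fin N → ℝ)} (hconv : Convex ℝ A)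
    (hsm : ∀ p ∈ A, ∀ q ∈ A,
      Real.sqrt (∑ i, (pd i φ p - pd i φ q) ^ 2) ≤ L * Real.sqrt (∑ i, (p i - q i) ^ 2))
    {p q : Fin N → ℝ} (hp : p ∈ A) (hq : q ∈ A) :
    φ p + ∑ i, pd i φ p * (q i - p i) - L / 2 * ∑ i, (q i - p i) ^ 2 ≤ φ q := by
  set v : Fin N → ℝ := fun i => q i - p i with hv
  set γ : ℝ → Fin N → ℝ := fun t => fun i => p i + t * v i with hγdef
  have γ0 : γ 0 = p := by funext i; simp [hγdef]
  have γ1 : γ 1 = q := by funext i; simp [hγdef, hv]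
  have γmem : ∀ t ∈ Set.Icc (0:ℝ) 1, γ t ∈ A := by
    intro t ht
    have h := hconv hp hq (by linarith [ht.2] : (0:ℝ) ≤ 1 - t) ht.1 (by ring)
    have he : γ t = (1 - t) • p + t • q := by funext i; simp [hγdef, hv]; ring
    rw [he]; exact h
  have γderiv : ∀ t : ℝ, HasDerivAt γ v t := by
    intro t
    apply hasDerivAt_pi.2
    intro i
    simpa [hγdef] using ((hasDerivAt_id t).mul_const (v i)).const_add (p i)
  have hh : ∀ t : ℝ, HasDerivAt (fun s => φ (γ s)) (fderiv ℝ φ (γ t) v) t := fun t =>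
    (hφ (γ t)).hasFDerivAt.comp_hasDerivAt t (γderiv t)
  set S : ℝ := ∑ i, v i ^ 2 with hSdef
  have hS0 : 0 ≤ S := Finset.sum_nonneg fun i _ => sq_nonneg _
  set c : ℝ := fderiv ℝ φ p v with hcdef
  set ψ : ℝ → ℝ := fun t => φ (γ t) - c * t + L / 2 * S * t ^ 2 with hψdef
  have hψd : ∀ t : ℝ, HasDerivAt ψ (fderiv ℝ φ (γ t) v - c + L / 2 * S * (2 * t)) t := by
    intro t
    have h1 : HasDerivAt (fun t : ℝ => c * t) c t := by
      simpa using (hasDerivAt_id t).const_mul c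
    have h2 : HasDerivAt (fun t : ℝ => L / 2 * S * t ^ 2) (L / 2 * S * (2 * t)) t := by
      have := (hasDerivAt_pow 2 t).const_mul (L / 2 * S)
      simpa [mul_comm] using this
    exact ((hh t).sub h1).add h2
  have hψdiff : Differentiable ℝ ψ := fun t => (hψd t).differentiableAt
  have hderiv_nonneg : ∀ t ∈ interior (Set.Icc (0:ℝ) 1), 0 ≤ deriv ψ t := by
    intro t ht
    rw [interior_Icc] at ht
    rw [(hψd t).deriv]
    have hmem : γ t ∈ A := γmem t ⟨ht.1.le, ht.2.le⟩
    have e1 : fderiv ℝ φ (γ t) v = ∑ i, v i * pd i φ (γ t) := fderiv_apply_eq_sum hφ _ _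
    have e2 : c = ∑ i, v i * pd i φ p := fderiv_apply_eq_sum hφ _ _
    have e3 : fderiv ℝ φ (γ t) v - c = ∑ i, (pd i φ (γ t) - pd i φ p) * v i := by
      rw [e1, e2, ← Finset.sum_sub_distrib]
      exact Finset.sum_congr rfl fun i _ => by ring
    have hcs := abs_sum_mul_le_sqrt (fun i => pd i φ (γ t) - pd i φ p) v
    have hsm' := hsm (γ t) hmem p hp
    have e4 : ∀ i, γ t i - p i = t * v i := by intro i; simp [hγdef]
    have e5 : Real.sqrt (∑ i, (γ t i - p i) ^ 2) = t * Real.sqrt S := by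
      have : ∑ i, (γ t i - p i) ^ 2 = t ^ 2 * S := by
        rw [hSdef, Finset.mul_sum]
        exact Finset.sum_congr rfl fun i _ => by rw [e4 i]; ring
      rw [this, Real.sqrt_mul (sq_nonneg t), Real.sqrt_sq ht.1.le]
    have e6 : Real.sqrt S * Real.sqrt S = S := Real.mul_self_sqrt hS0
    have hb : |fderiv ℝ φ (γ t) v - c| ≤ L * (t * S) := by
      rw [e3]
      calc |∑ i, (pd i φ (γ t) - pd i φ p) * v i|
          ≤ Real.sqrt (∑ i, (pd i φ (γ t) - pd i φ p) ^ 2) * Real.sqrt (∑ i, v i ^ 2) := hcs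
        _ ≤ L * Real.sqrt (∑ i, (γ t i - p i) ^ 2) * Real.sqrt S := by
            apply mul_le_mul_of_nonneg_right _ (Real.sqrt_nonneg _)
            exact hsm'
        _ = L * (t * √S) * √S := by rw [e5]
        _ = L * (t * (√S * √S)) := by ring
        _ = L * (t * S) := by rw [e6]
    have := abs_le.1 hb
    nlinarith [this.1]
  have hmono : MonotoneOn ψ (Set.Icc (0:ℝ) 1) :=
    monotoneOn_of_deriv_nonneg (convex_Icc 0 1) hψdiff.continuous.continuousOn
      hψdiff.differentiableOn hderiv_nonneg
  have h01 := hmono (Set.mem_Icc.2 ⟨le_refl 0, zero_le_one⟩)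
    (Set.mem_Icc.2 ⟨zero_le_one, le_refl 1⟩) zero_le_one
  have eψ0 : ψ 0 = φ p := by simp [hψdef, γ0]
  have eψ1 : ψ 1 = φ q - c + L / 2 * S := by simp [hψdef, γ1]
  have e2 : c = ∑ i, pd i φ p * v i := by
    rw [hcdef, fderiv_apply_eq_sum hφ]
    exact Finset.sum_congr rfl fun i _ => mul_comm _ _
  rw [eψ0, eψ1] at h01
  have : ∑ i, pd i φ p * (q i - p i) = c := by rw [e2]
  rw [this]
  rw [hSdef] at h01
  linarith


lemma coord_fix {lo hi x ηi G : ℝ} (hx : lo ≤ x) (hx' : x ≤ hi)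
    (hfix : max lo (min hi (x + ηi * G)) = x) (hηi : 0 < ηi) (hGne : G ≠ 0) :
    (0 < G ∧ x = hi) ∨ (G < 0 ∧ x = lo) := by
  rcases hGne.lt_or_gt with hGn | hGp
  · right
    refine ⟨hGn, ?_⟩
    have hη : ηi * G < 0 := mul_neg_of_pos_of_neg hηi hGn
    rcases clamp_cases hx hx' (z := x + ηi * G) with ⟨_, _, hcl⟩ | ⟨hov, _⟩ | ⟨_, hcl⟩
    · rw [hcl] at hfix; nlinarith
    · nlinarith
    · rw [hcl] at hfix; exact hfix.symm
  · left
    refine ⟨hGp, ?_⟩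
    have hη : 0 < ηi * G := mul_pos hηi hGp
    rcases clamp_cases hx hx' (z := x + ηi * G) with ⟨_, _, hcl⟩ | ⟨_, hcl⟩ | ⟨hun, _⟩
    · rw [hcl] at hfix; nlinarith
    · rw [hcl] at hfix; exact hfix.symm
    · nlinarith

lemma coord_gain {lo hi x b ηi G F β L D ηb : ℝ}
    (hx : lo ≤ x) (hx' : x ≤ hi) (hb : b = max lo (min hi (x + ηi * G)))
    (hbx : b ≠ x)
    (hηi : 0 < ηi) (hηb : ηi ≤ ηb)
    (hG2 : 2 * β < |G|) (hGD : |G| ≤ D) (hFG : |F - G| ≤ β)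
    (hβ : 0 < β) (hβD : 2 * β < D) (hL : 0 < L)
    (hc2 : L * ηb / 2 ≤ β ^ 2 / D ^ 2) :
    (ηi * β ^ 2 ≤ F * (b - x) - L / 2 * (b - x) ^ 2) ∨
    (β / 2 * (hi - lo) ≤ F * (b - x) - L / 2 * (b - x) ^ 2) ∨
    ((lo < x ∧ x < hi) ∧ (b = lo ∨ b = hi) ∧ 0 ≤ F * (b - x) - L / 2 * (b - x) ^ 2) := by
  have hGne : G ≠ 0 := by
    intro h; rw [h, abs_zero] at hG2; linarith
  have hDpos : (0:ℝ) < D := by linarith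
  have hD2 : (0:ℝ) < D ^ 2 := pow_pos hDpos 2
  have t1 : L / 2 * ηi ≤ β ^ 2 / D ^ 2 := by
    nlinarith [mul_nonneg (by linarith : (0:ℝ) ≤ ηb - ηi) hL.le]
  have t2 : G ^ 2 ≤ D ^ 2 := by
    have h := abs_le.1 hGD; nlinarith [h.1, h.2]
  have hFG1 := (abs_le.1 hFG).1
  have hFG2 := (abs_le.1 hFG).2
  have c4 : β ^ 2 / D ≤ β / 2 := by
    rw [div_le_iff₀ hDpos]; nlinarith
  rcases hGne.lt_or_gt with hGn | hGp
  · -- G < 0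
    have hGa : |G| = -G := abs_of_neg hGn
    rw [hGa] at hG2 hGD
    have hηG : ηi * G < 0 := mul_neg_of_pos_of_neg hηi hGn
    rcases clamp_cases hx hx' (z := x + ηi * G) with ⟨_, _, hcl⟩ | ⟨hov, _⟩ | ⟨hun, hcl⟩
    · -- unclamped
      left
      rw [hb, hcl, show x + ηi * G - x = ηi * G by ring]
      have t3 : (L / 2 * ηi) * (ηi * G ^ 2) ≤ (β ^ 2 / D ^ 2) * (ηi * D ^ 2) :=
        mul_le_mul t1 (by nlinarith) (by positivity) (by positivity)
      rw [show (β ^ 2 / D ^ 2) * (ηi * D ^ 2) = ηi * β ^ 2 by field_simp] at t3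
      have s2 : L / 2 * (ηi * G) ^ 2 ≤ ηi * β ^ 2 := by nlinarith [t3]
      have t5 : (G + β) * (ηi * G) ≤ F * (ηi * G) :=
        mul_le_mul_of_nonpos_right (by linarith) hηG.le
      have t6 : 2 * β ^ 2 ≤ G ^ 2 + β * G := by
        nlinarith [mul_nonneg (by linarith : (0:ℝ) ≤ -(G + 2 * β)) (by linarith : (0:ℝ) ≤ β - G)]
      have s6 := mul_le_mul_of_nonneg_left t6 hηi.le
      nlinarith [s2, t5, s6]
    · exact absurd hov (by nlinarith)
    · -- clamped at lo
      have hbval : b = lo := by rw [hb, hcl]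
      have hxlo : lo < x := by
        rcases eq_or_lt_of_le hx with h | h
        · exact absurd (hbval.trans h) hbx
        · exact h
      have hdle : x - lo < ηi * (-G) := by nlinarith
      have chain : L / 2 * (x - lo) ≤ β / 2 := by
        have c1 : L / 2 * (x - lo) ≤ L / 2 * (ηi * (-G)) := by nlinarith
        have c2 := mul_le_mul_of_nonneg_right t1 (by linarith : (0:ℝ) ≤ -G)
        have c3 := mul_le_mul_of_nonneg_left hGD (by positivity : (0:ℝ) ≤ β ^ 2 / D ^ 2)
        have c3' : (β ^ 2 / D ^ 2) * D = β ^ 2 / D := by field_simp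
        linarith [c1, c2, c3, c3', c4]
      have t5 : (G + β) * (lo - x) ≤ F * (lo - x) := by
        nlinarith [mul_nonneg (by linarith : (0:ℝ) ≤ G + β - F) (by linarith : (0:ℝ) ≤ x - lo)]
      have s7 : (x - lo) * β ≤ (x - lo) * (-G - β) :=
        mul_le_mul_of_nonneg_left (by linarith) (by linarith)
      have chainmul := mul_le_mul_of_nonneg_left chain (by linarith : (0:ℝ) ≤ x - lo)
      have gainlb : (x - lo) * (β / 2) ≤ F * (b - x) - L / 2 * (b - x) ^ 2 := by
        rw [hbval]
        linarith [t5, s7, chainmul]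
      rcases eq_or_lt_of_le hx' with hxhi | hxhi
      · right; left; rw [← hxhi]; linarith [gainlb]
      · right; right
        exact ⟨⟨hxlo, hxhi⟩, Or.inl hbval, le_trans (mul_nonneg (by linarith) (by linarith)) gainlb⟩
  · -- G > 0
    have hGa : |G| = G := abs_of_pos hGp
    rw [hGa] at hG2 hGD
    have hηG : 0 < ηi * G := mul_pos hηi hGp
    rcases clamp_cases hx hx' (z := x + ηi * G) with ⟨_, _, hcl⟩ | ⟨hov, hcl⟩ | ⟨hun, _⟩
    · left
      rw [hb, hcl, show x + ηi * G - x = ηi * G by ring]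
      have t3 : (L / 2 * ηi) * (ηi * G ^ 2) ≤ (β ^ 2 / D ^ 2) * (ηi * D ^ 2) :=
        mul_le_mul t1 (by nlinarith) (by positivity) (by positivity)
      rw [show (β ^ 2 / D ^ 2) * (ηi * D ^ 2) = ηi * β ^ 2 by field_simp] at t3
      have s2 : L / 2 * (ηi * G) ^ 2 ≤ ηi * β ^ 2 := by nlinarith [t3]
      have t5 : (G - β) * (ηi * G) ≤ F * (ηi * G) :=
        mul_le_mul_of_nonneg_right (by linarith) hηG.le
      have t6 : 2 * β ^ 2 ≤ G ^ 2 - β * G := by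
        nlinarith [mul_nonneg (by linarith : (0:ℝ) ≤ G - 2 * β) (by linarith : (0:ℝ) ≤ G + β)]
      have s6 := mul_le_mul_of_nonneg_left t6 hηi.le
      nlinarith [s2, t5, s6]
    · -- clamped at hi
      have hbval : b = hi := by rw [hb, hcl]
      have hxhi : x < hi := by
        rcases eq_or_lt_of_le hx' with h | h
        · exact absurd (hbval.trans h.symm) hbx
        · exact h
      have hdle : hi - x < ηi * G := by nlinarith
      have chain : L / 2 * (hi - x) ≤ β / 2 := by
        have c1 : L / 2 * (hi - x) ≤ L / 2 * (ηi * G) := by nlinarith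
        have c2 := mul_le_mul_of_nonneg_right t1 (by linarith : (0:ℝ) ≤ G)
        have c3 := mul_le_mul_of_nonneg_left hGD (by positivity : (0:ℝ) ≤ β ^ 2 / D ^ 2)
        have c3' : (β ^ 2 / D ^ 2) * D = β ^ 2 / D := by field_simp
        linarith [c1, c2, c3, c3', c4]
      have t5 : (G - β) * (hi - x) ≤ F * (hi - x) := by
        nlinarith [mul_nonneg (by linarith : (0:ℝ) ≤ F - (G - β)) (by linarith : (0:ℝ) ≤ hi - x)]
      have s7 : (hi - x) * β ≤ (hi - x) * (G - β) :=
        mul_le_mul_of_nonneg_left (by linarith) (by linarith)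
      have chainmul := mul_le_mul_of_nonneg_left chain (by linarith : (0:ℝ) ≤ hi - x)
      have gainlb : (hi - x) * (β / 2) ≤ F * (b - x) - L / 2 * (b - x) ^ 2 := by
        rw [hbval]
        linarith [t5, s7, chainmul]
      rcases eq_or_lt_of_le hx with hxlo | hxlo
      · right; left; rw [hxlo]; linarith [gainlb]
      · right; right
        exact ⟨⟨hxlo, hxhi⟩, Or.inr hbval, le_trans (mul_nonneg (by linarith) (by linarith)) gainlb⟩
    · exact absurd hun (by nlinarith)
/-- **Convergence of simultaneous gradient play conditioned on gradient value.**
Under concavity of each `u_i` in its own action, an `L`-smooth `α`-potential function `φ`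
bounded from above and satisfying the gradient relation `|∂φ/∂a_i − ∂u_i/∂a_i| ≤ α/a_δ`,
and small enough step sizes, the conditioned simultaneous (projected) gradient play dynamics
reach, after finitely many iterations, action profiles that are `2α`-Nash equilibria. -/
theorem gradient_play_convergence
    {N : ℕ} (hN : 0 < N)
    (lo hi : Fin N → ℝ) (hlohi : ∀ i, lo i ≤ hi i)
    (u : Fin N → (Fin N → ℝ) → ℝ) (hu : ∀ i, ContDiff ℝ 2 (u i))
    (A : Set (Fin N → ℝ)) (hA : A = Set.univ.pi fun i => Set.Icc (lo i) (hi i))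
    (aδ : ℝ)
    (haδ : aδ = sSup {d : ℝ | ∃ i : Fin N, ∃ x ∈ Set.Icc (lo i) (hi i),
      ∃ y ∈ Set.Icc (lo i) (hi i), d = |x - y|})
    (D : ℝ) (hD : 0 < D) (hDbound : ∀ i : Fin N, ∀ a ∈ A, |pd i (u i) a| ≤ D)
    (hconc : ∀ i : Fin N, ∀ a ∈ A,
      ConcaveOn ℝ (Set.Icc (lo i) (hi i)) (fun t => u i (Function.update a i t)))
    (φ : (Fin N → ℝ) → ℝ) (α L : ℝ) (hαpos : 0 < α) (hLpos : 0 < L)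
    (hφdiff : Differentiable ℝ φ)
    (hsmooth : ∀ a ∈ A, ∀ b ∈ A,
      Real.sqrt (∑ i, (pd i φ a - pd i φ b) ^ 2) ≤ L * Real.sqrt (∑ i, (a i - b i) ^ 2))
    (hpot : ∀ i : Fin N, ∀ a ∈ A, ∀ ai' ∈ Set.Icc (lo i) (hi i),
      |(u i a - u i (Function.update a i ai')) - (φ a - φ (Function.update a i ai'))| ≤ α)
    (hbddAbove : ∃ M : ℝ, ∀ a ∈ A, φ a ≤ M)
    (hgradrel : ∀ i : Fin N, ∀ a ∈ A, |pd i φ a - pd i (u i) a| ≤ α / aδ)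
    (η : Fin N → ℝ) (hη : ∀ i, 0 < η i)
    (ηbar ξ₁ ξ₂ : ℝ) (hηbar : ηbar = ⨆ i, η i)
    (hξ₁ : ξ₁ = 1 / aδ) (hξ₂ : ξ₂ = min (2 * ξ₁ / L) (1 / D))
    (hηsmall : ηbar ≤ min (1 / L) (min (2 * ξ₁ ^ 2 * α ^ 2 / (L * D ^ 2))
      (L * ξ₂ ^ 2 * α ^ 2 / (2 * (ξ₁ * α * D + ξ₁ ^ 2 * α ^ 2)))))
    (a : ℕ → Fin N → ℝ) (ha0 : a 0 ∈ A)
    (hdyn : ∀ k, ∀ i : Fin N,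
      a (k + 1) i = if 2 * α / aδ < |pd i (u i) (a k)|
        then max (lo i) (min (hi i) (a k i + η i * pd i (u i) (a k)))
        else a k i) :
    ∃ kbar : ℕ, ∀ k, kbar ≤ k →
      ∀ i : Fin N, ∀ ai' ∈ Set.Icc (lo i) (hi i),
        u i (a k) ≥ u i (Function.update (a k) i ai') - 2 * α := by
  haveI hNe : Nonempty (Fin N) := Fin.pos_iff_nonempty.mp hN
  have hu1 : ∀ i, Differentiable ℝ (u i) := fun i => (hu i).differentiable (by norm_num)
  -- all iterates stay in A
  have memA : ∀ k, a k ∈ A := by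
    intro k
    induction k with
    | zero => exact ha0
    | succ k ih =>
      rw [hA, Set.mem_univ_pi]
      intro i
      rw [hdyn k i]
      split
      · exact ⟨le_max_left _ _, max_le (hlohi i) (min_le_left _ _)⟩
      · rw [hA, Set.mem_univ_pi] at ih; exact ih i
  have memIcc : ∀ k i, a k i ∈ Set.Icc (lo i) (hi i) := by
    intro k i
    have h := memA k
    rw [hA, Set.mem_univ_pi] at h
    exact h i
  -- facts about aδ
  have i0 : Fin N := ⟨0, hN⟩
  have hbddS : BddAbove {d : ℝ | ∃ i : Fin N, ∃ x ∈ Set.Icc (lo i) (hi i),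
      ∃ y ∈ Set.Icc (lo i) (hi i), d = |x - y|} := by
    refine ⟨Finset.univ.sup' Finset.univ_nonempty (fun i => hi i - lo i), ?_⟩
    rintro d ⟨i, x, hx, y, hy, rfl⟩
    refine le_trans ?_ (Finset.le_sup' (fun i => hi i - lo i) (Finset.mem_univ i))
    rw [abs_sub_le_iff]
    exact ⟨by linarith [hx.1, hx.2, hy.1, hy.2], by linarith [hx.1, hx.2, hy.1, hy.2]⟩
  have hdle : ∀ (i : Fin N) {x y : ℝ}, x ∈ Set.Icc (lo i) (hi i) → y ∈ Set.Icc (lo i) (hi i) →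
      |x - y| ≤ aδ := by
    intro i x y hx hy
    rw [haδ]
    exact le_csSup hbddS ⟨i, x, hx, y, hy, rfl⟩
  have haδnn : 0 ≤ aδ := by
    have h := hdle i0 (Set.mem_Icc.2 ⟨le_refl _, hlohi i0⟩) (Set.mem_Icc.2 ⟨le_refl _, hlohi i0⟩)
    simpa using h
  -- tangent-line bound from concavity
  have hslice : ∀ (i : Fin N) (x : Fin N → ℝ),
      Differentiable ℝ (fun t => u i (Function.update x i t)) :=
    fun i x t => (slice_hasDerivAt (u i) (hu1 i) x i t).differentiableAt
  have hNEbound : ∀ k (i : Fin N), ∀ ai' ∈ Set.Icc (lo i) (hi i),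
      u i (Function.update (a k) i ai') ≤ u i (a k) + pd i (u i) (a k) * (ai' - a k i) := by
    intro k i ai' hai'
    have ht := tangent_le (hconc i (a k) (memA k)) (hslice i (a k)) (memIcc k i) hai'
    rw [Function.update_eq_self] at ht
    exact ht
  by_cases hδpos : 0 < aδ
  case neg =>
    -- degenerate case: all intervals are single points
    have haδ0 : aδ = 0 := le_antisymm (not_lt.1 hδpos) haδnn
    refine ⟨0, fun k _ i ai' hai' => ?_⟩
    have h1 := hdle i hai' (memIcc k i)
    rw [haδ0] at h1
    have h2 : ai' - a k i = 0 := by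
      have := abs_nonneg (ai' - a k i)
      exact abs_eq_zero.1 (le_antisymm h1 this)
    have h3 : ai' = a k i := by linarith
    rw [h3, Function.update_eq_self]
    linarith
  -- aδ > 0 from here on
  have hdev : ∀ k (i : Fin N), ∀ ai' ∈ Set.Icc (lo i) (hi i),
      |pd i (u i) (a k)| ≤ 2 * α / aδ →
      u i (a k) ≥ u i (Function.update (a k) i ai') - 2 * α := by
    intro k i ai' hai' hg
    have h1 := hNEbound k i ai' hai'
    have h2 : pd i (u i) (a k) * (ai' - a k i) ≤ |pd i (u i) (a k)| * |ai' - a k i| := by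
      calc pd i (u i) (a k) * (ai' - a k i) ≤ |pd i (u i) (a k) * (ai' - a k i)| := le_abs_self _
        _ = |pd i (u i) (a k)| * |ai' - a k i| := abs_mul _ _
    have h3 := hdle i hai' (memIcc k i)
    have h4 : |pd i (u i) (a k)| * |ai' - a k i| ≤ (2 * α / aδ) * aδ :=
      mul_le_mul hg h3 (abs_nonneg _) (div_nonneg (by linarith) haδnn)
    have h5 : (2 * α / aδ) * aδ = 2 * α := by
      field_simp
    linarith
  by_cases hDsmall : D ≤ 2 * α / aδ
  · exact ⟨0, fun k _ i ai' hai' =>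
      hdev k i ai' hai' (le_trans (hDbound i (a k) (memA k)) hDsmall)⟩
  push_neg at hDsmall
  -- main branch
  set β := α / aδ with hβ
  have hβpos : 0 < β := div_pos hαpos hδpos
  have h2β : 2 * α / aδ = 2 * β := by rw [hβ]; ring
  have hβD : 2 * β < D := by rw [← h2β]; exact hDsmall
  have hηle : ∀ i, η i ≤ ηbar := by
    intro i
    rw [hηbar]
    exact le_ciSup (Set.Finite.bddAbove (Set.finite_range η)) i
  obtain ⟨h1L, hrest⟩ := le_min_iff.1 hηsmall
  obtain ⟨h2c, -⟩ := le_min_iff.1 hrest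
  have haδne : aδ ≠ 0 := ne_of_gt hδpos
  have hβξ : 2 * ξ₁ ^ 2 * α ^ 2 = 2 * β ^ 2 := by rw [hξ₁, hβ]; field_simp
  rw [hβξ] at h2c
  have hc2 : L * ηbar / 2 ≤ β ^ 2 / D ^ 2 := by
    have hD2 : (0:ℝ) < D ^ 2 := by positivity
    rw [le_div_iff₀ (by positivity : (0:ℝ) < L * D ^ 2)] at h2c
    rw [div_le_div_iff₀ (by norm_num) hD2]
    nlinarith [h2c]
  -- per-coordinate minimal gains
  set δi : Fin N → ℝ := fun i =>
    if lo i < hi i then min (η i * β ^ 2) (β / 2 * (hi i - lo i)) else 1 with hδidef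
  have hδipos : ∀ i, 0 < δi i := by
    intro i
    rw [hδidef]
    dsimp only
    split
    · rename_i h
      exact lt_min (mul_pos (hη i) (pow_pos hβpos 2)) (mul_pos (half_pos hβpos) (sub_pos.2 h))
    · exact one_pos
  set δ0 : ℝ := Finset.univ.inf' Finset.univ_nonempty δi with hδ0def
  have hδ0pos : 0 < δ0 := by
    rw [hδ0def, Finset.lt_inf'_iff]
    exact fun i _ => hδipos i
  have hδ0le : ∀ i, δ0 ≤ δi i := fun i => Finset.inf'_le _ (Finset.mem_univ i)
  -- endpoint indicator and Lyapunov function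
  set e : ℕ → Fin N → ℝ :=
    fun k i => if a k i = lo i ∨ a k i = hi i then 1 else 0 with he
  set Ψ : ℕ → ℝ := fun k => φ (a k) + δ0 / 2 * ∑ i, e k i with hΨ
  obtain ⟨M, hM⟩ := hbddAbove
  have hΨub : ∀ k, Ψ k ≤ M + δ0 / 2 * N := by
    intro k
    rw [hΨ]
    dsimp only
    have h1 : φ (a k) ≤ M := hM _ (memA k)
    have h2 : ∑ i, e k i ≤ (N : ℝ) := by
      calc ∑ i, e k i ≤ ∑ _i : Fin N, (1 : ℝ) := by
            refine Finset.sum_le_sum fun i _ => ?_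
            rw [he]; dsimp only; split <;> norm_num
        _ = N := by simp
    nlinarith [mul_le_mul_of_nonneg_left h2 (by positivity : (0:ℝ) ≤ δ0 / 2)]
  have hconvA : Convex ℝ A := by
    rw [hA]; exact convex_pi fun i _ => convex_Icc _ _
  -- the main step estimate
  have hstep : ∀ k, (∃ i, a (k + 1) i ≠ a k i) → Ψ k + δ0 / 2 ≤ Ψ (k + 1) := by
    intro k hkmove
    obtain ⟨iw, hiw⟩ := hkmove
    have hdesc := descent hφdiff hconvA hsmooth (memA k) (memA (k + 1))
    have claim : ∀ i : Fin N, (if a (k + 1) i = a k i then (0:ℝ) else δ0 / 2) ≤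
        (pd i φ (a k) * (a (k + 1) i - a k i) - L / 2 * (a (k + 1) i - a k i) ^ 2)
          + δ0 / 2 * (e (k + 1) i - e k i) := by
      intro i
      by_cases hm : a (k + 1) i = a k i
      · rw [if_pos hm]
        have heq : e (k + 1) i = e k i := by rw [he]; dsimp only; rw [hm]
        rw [hm, heq]
        simp
      · rw [if_neg hm]
        have hcond : 2 * α / aδ < |pd i (u i) (a k)| := by
          by_contra hc
          rw [hdyn k i, if_neg hc] at hm
          exact hm rfl
        have hbval : a (k + 1) i
            = max (lo i) (min (hi i) (a k i + η i * pd i (u i) (a k))) := by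
          rw [hdyn k i, if_pos hcond]
        rw [h2β] at hcond
        have hgD : |pd i (u i) (a k)| ≤ D := hDbound i (a k) (memA k)
        have hfg : |pd i φ (a k) - pd i (u i) (a k)| ≤ β := by
          have h := hgradrel i (a k) (memA k)
          simpa [hβ] using h
        have hgain := coord_gain (memIcc k i).1 (memIcc k i).2 hbval hm (hη i) (hηle i)
          hcond hgD hfg hβpos hβD hLpos hc2
        -- lo i < hi i since the coordinate moved
        have hlh : lo i < hi i := by
          rcases eq_or_lt_of_le (hlohi i) with h | h
          · exfalso
            have h1 := memIcc k i
            have h2 := memIcc (k + 1) i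
            have e1 : a (k + 1) i = lo i := le_antisymm (h ▸ h2.2) h2.1
            have e2 : a k i = lo i := le_antisymm (h ▸ h1.2) h1.1
            exact hm (e1.trans e2.symm)
          · exact h
        have hδi : δi i = min (η i * β ^ 2) (β / 2 * (hi i - lo i)) := by
          rw [hδidef]; dsimp only; rw [if_pos hlh]
        have he0' : (0:ℝ) ≤ e (k + 1) i := by rw [he]; dsimp only; split <;> norm_num
        have hek1 : e k i ≤ 1 := by rw [he]; dsimp only; split <;> norm_num
        rcases hgain with hg1 | hg2 | ⟨⟨hxlo, hxhi⟩, hbend, hg3⟩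
        · have hδ1 : δ0 ≤ η i * β ^ 2 := le_trans (hδ0le i) (by rw [hδi]; exact min_le_left _ _)
          nlinarith [hg1, hδ1, mul_nonneg (by positivity : (0:ℝ) ≤ δ0 / 2)
            (by linarith [he0', hek1] : (0:ℝ) ≤ e (k + 1) i - e k i + 1)]
        · have hδ1 : δ0 ≤ β / 2 * (hi i - lo i) :=
            le_trans (hδ0le i) (by rw [hδi]; exact min_le_right _ _)
          nlinarith [hg2, hδ1, mul_nonneg (by positivity : (0:ℝ) ≤ δ0 / 2)
            (by linarith [he0', hek1] : (0:ℝ) ≤ e (k + 1) i - e k i + 1)]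
        · have hek0 : e k i = 0 := by
            rw [he]; dsimp only
            rw [if_neg]
            push_neg
            exact ⟨ne_of_gt hxlo, ne_of_lt hxhi⟩
          have hek'1 : e (k + 1) i = 1 := by
            rw [he]; dsimp only
            rw [if_pos hbend]
          rw [hek0, hek'1]
          linarith [hg3]
    have hsum := Finset.sum_le_sum fun i (_ : i ∈ Finset.univ) => claim i
    have hlb : δ0 / 2 ≤ ∑ i, (if a (k + 1) i = a k i then (0:ℝ) else δ0 / 2) := by
      have h1 : (if a (k + 1) iw = a k iw then (0:ℝ) else δ0 / 2) = δ0 / 2 := if_neg hiw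
      calc δ0 / 2 = (if a (k + 1) iw = a k iw then (0:ℝ) else δ0 / 2) := h1.symm
        _ ≤ ∑ i, (if a (k + 1) i = a k i then (0:ℝ) else δ0 / 2) := by
            refine Finset.single_le_sum
              (f := fun i => if a (k + 1) i = a k i then (0:ℝ) else δ0 / 2)
              (fun i _ => ?_) (Finset.mem_univ iw)
            split
            · exact le_refl _
            · positivity
    have hsplit : ∑ i, ((pd i φ (a k) * (a (k + 1) i - a k i)
            - L / 2 * (a (k + 1) i - a k i) ^ 2) + δ0 / 2 * (e (k + 1) i - e k i))
        = ((∑ i, pd i φ (a k) * (a (k + 1) i - a k i))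
            - L / 2 * ∑ i, (a (k + 1) i - a k i) ^ 2)
          + δ0 / 2 * ((∑ i, e (k + 1) i) - ∑ i, e k i) := by
      have h1 : ∑ i : Fin N, (δ0 / 2 * (e (k + 1) i - e k i))
          = δ0 / 2 * ((∑ i, e (k + 1) i) - ∑ i, e k i) := by
        rw [← Finset.mul_sum, Finset.sum_sub_distrib]
      have h2 : ∑ i : Fin N, (L / 2 * (a (k + 1) i - a k i) ^ 2)
          = L / 2 * ∑ i, (a (k + 1) i - a k i) ^ 2 := (Finset.mul_sum _ _ _).symm
      rw [Finset.sum_add_distrib, Finset.sum_sub_distrib, h1, h2]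
    rw [hΨ]
    dsimp only
    rw [hsplit] at hsum
    linarith [hdesc, hsum, hlb]
  -- case split: either the dynamics stop, or Ψ grows without bound
  by_cases hfix : ∃ k0, ∀ i, a (k0 + 1) i = a k0 i
  · obtain ⟨k0, hk0⟩ := hfix
    have hconst : ∀ k, k0 ≤ k → a k = a k0 := by
      intro k hk
      induction k with
      | zero =>
        have h0 : k0 = 0 := Nat.le_zero.1 hk
        rw [h0]
      | succ k ih =>
        rcases Nat.lt_or_ge k0 (k + 1) with h | h
        · have hk' : k0 ≤ k := Nat.lt_succ_iff.1 h
          have hak := ih hk'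
          funext i
          rw [hdyn k i, hak, ← hdyn k0 i, hk0 i]
        · have : k0 = k + 1 := le_antisymm hk h
          rw [this]
    refine ⟨k0, fun k hk i ai' hai' => ?_⟩
    rw [hconst k hk]
    by_cases hc : 2 * α / aδ < |pd i (u i) (a k0)|
    · have hfixi := hk0 i
      rw [hdyn k0 i, if_pos hc] at hfixi
      have hGne : pd i (u i) (a k0) ≠ 0 := by
        intro h0
        rw [h0, abs_zero] at hc
        have : 0 < 2 * α / aδ := div_pos (by linarith) hδpos
        linarith
      rcases coord_fix (memIcc k0 i).1 (memIcc k0 i).2 hfixi (hη i) hGne with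
        ⟨hGp, hxhi⟩ | ⟨hGn, hxlo⟩
      · have h1 := hNEbound k0 i ai' hai'
        have h2 : pd i (u i) (a k0) * (ai' - a k0 i) ≤ 0 :=
          mul_nonpos_of_nonneg_of_nonpos hGp.le (by linarith [hai'.2, hxhi])
        linarith
      · have h1 := hNEbound k0 i ai' hai'
        have h2 : pd i (u i) (a k0) * (ai' - a k0 i) ≤ 0 :=
          mul_nonpos_of_nonpos_of_nonneg hGn.le (by linarith [hai'.1, hxlo])
        linarith
    · push_neg at hc
      exact hdev k0 i ai' hai' hc
  · push_neg at hfix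
    exfalso
    have hΨgrow : ∀ k : ℕ, Ψ 0 + k * (δ0 / 2) ≤ Ψ k := by
      intro k
      induction k with
      | zero => simp
      | succ k ih =>
        have hs := hstep k (hfix k)
        have hcast : ((k + 1 : ℕ) : ℝ) = (k : ℝ) + 1 := by push_cast; ring
        rw [hcast]
        nlinarith [ih, hs]
    obtain ⟨n, hn⟩ := exists_nat_gt ((M + δ0 / 2 * N - Ψ 0) / (δ0 / 2))
    have h1 := hΨgrow n
    have h2 := hΨub n
    rw [div_lt_iff₀ (by positivity : (0:ℝ) < δ0 / 2)] at hn
    linarith
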